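/- If G is a minimal counterexample (as defined in the context), then G has no vertex with two neighbors of degree 1. -/

import Mathlib

open Set

/-- The degree of a vertex `v` in a simple graph `G`. -/
noncomputable def deg {V : Type*} (G : SimpleGraph V) (v : V) : ℕ :=
  (G.neighborSet v).ncard

/-- `S` is a dominating set of `G`: every vertex not in `S` has a neighbor in `S`. -/
def IsDomSet {V : Type*} (G : SimpleGraph V) (S : Set V) : Prop :=
  ∀ v ∉ S, ∃ u ∈ S, G.Adj u v

/-- `S` is an independent dominating set of `G`. -/
def IsIndepDomSet {V : Type*} (G : SimpleGraph V) (S : Set V) : Prop :=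
  IsDomSet G S ∧ ∀ u ∈ S, ∀ v ∈ S, ¬ G.Adj u v

/-- The independent domination number `i(G)`. -/
noncomputable def indepDomNum {V : Type*} (G : SimpleGraph V) : ℕ :=
  sInf {n | ∃ S : Set V, IsIndepDomSet G S ∧ S.ncard = n}

/-- The domination number `γ(G)`. -/
noncomputable def domNum {V : Type*} (G : SimpleGraph V) : ℕ :=
  sInf {n | ∃ S : Set V, IsDomSet G S ∧ S.ncard = n}

/-- `G` contains no cycle on 4 vertices as a subgraph. -/
def NoFourCycle {V : Type*} (G : SimpleGraph V) : Prop :=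
  ¬ ∃ a b c d : V, a ≠ b ∧ a ≠ c ∧ a ≠ d ∧ b ≠ c ∧ b ≠ d ∧ c ≠ d ∧
      G.Adj a b ∧ G.Adj b c ∧ G.Adj c d ∧ G.Adj d a

/-- `nk G k` is the number of vertices of degree `k` in `G`. -/
noncomputable def nk {V : Type*} (G : SimpleGraph V) (k : ℕ) : ℕ :=
  {v | deg G v = k}.ncard

/-- The weight of a vertex: 14, 9, 6, 5 according as its degree is 0, 1, 2, 3. -/
noncomputable def wt {V : Type*} (G : SimpleGraph V) (v : V) : ℕ :=
  if deg G v = 0 then 14 else if deg G v = 1 then 9 else if deg G v = 2 then 6 else 5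

/-- The weight of a set of vertices: the sum of their weights. -/
noncomputable def wtSet {V : Type*} (G : SimpleGraph V) (X : Set V) : ℕ :=
  ∑ᶠ v ∈ X, wt G v

/-- The weight of the whole graph `G`. -/
noncomputable def wtGraph {V : Type*} (G : SimpleGraph V) : ℕ :=
  wtSet G Set.univ

/-- `G` is a minimal counterexample: subcubic, no 4-cycle, `14·i(G) > w(G)`,
and every proper subgraph `H` of `G` satisfies `14·i(H) ≤ w(H)`. -/
def MinimalCounterexample {V : Type*} [Fintype V] (G : SimpleGraph V) : Prop :=
  (∀ v, deg G v ≤ 3) ∧ NoFourCycle G ∧ wtGraph G < 14 * indepDomNum G ∧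
    ∀ H : G.Subgraph, H ≠ ⊤ → 14 * indepDomNum H.coe ≤ wtGraph H.coe


section Aux

variable {V : Type*}

lemma wt_ge_five (G : SimpleGraph V) (x : V) : 5 ≤ wt G x := by
  unfold wt; split_ifs <;> norm_num

lemma wt_of_deg_one {G : SimpleGraph V} {x : V} (h : deg G x = 1) : wt G x = 9 := by
  unfold wt; simp [h]

lemma exists_isIndepDomSet [Finite V] (G : SimpleGraph V) : ∃ S, IsIndepDomSet G S := by
  obtain ⟨S, hS, hmax⟩ := Set.Finite.exists_maximalFor id
    {S : Set V | ∀ u ∈ S, ∀ w ∈ S, ¬ G.Adj u w} (Set.toFinite _) ⟨∅, by simp⟩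
  refine ⟨S, ?_, hS⟩
  intro x hx
  by_contra hcon
  push_neg at hcon
  have hind : insert x S ∈ {S : Set V | ∀ u ∈ S, ∀ w ∈ S, ¬ G.Adj u w} := by
    intro u hu w hw
    rcases hu with rfl | hu <;> rcases hw with rfl | hw
    · exact fun h => G.irrefl h
    · exact fun h => hcon w hw h.symm
    · exact fun h => hcon u hu h
    · exact hS u hu w hw
  have heq : S = insert x S := (Set.subset_insert x S).antisymm (hmax hind (Set.subset_insert x S))
  exact hx (by rw [show S = insert x S from heq]; exact Set.mem_insert x S)

lemma neighborSet_eq_of_deg_one [Finite V] {G : SimpleGraph V} {a v : V}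
    (h1 : deg G a = 1) (h2 : G.Adj v a) : G.neighborSet a = {v} := by
  rw [deg] at h1
  obtain ⟨w, hw⟩ := Set.ncard_eq_one.mp h1
  have hv : v ∈ G.neighborSet a := h2.symm
  rw [hw] at hv ⊢
  simp only [Set.mem_singleton_iff] at hv
  rw [hv]

lemma deg_induce (G : SimpleGraph V) (s : Set V) (x : V) (hx : x ∈ s) :
    deg ((⊤ : G.Subgraph).induce s).coe ⟨x, hx⟩ = (G.neighborSet x ∩ s).ncard := by
  have himg : Subtype.val '' (((⊤ : G.Subgraph).induce s).coe.neighborSet ⟨x, hx⟩)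
      = G.neighborSet x ∩ s := by
    ext y
    simp only [Set.mem_image, SimpleGraph.mem_neighborSet, SimpleGraph.Subgraph.coe_adj,
      SimpleGraph.Subgraph.induce_adj, SimpleGraph.Subgraph.top_adj, Set.mem_inter_iff]
    constructor
    · rintro ⟨⟨y', hy'⟩, ⟨_, hys, hadj⟩, rfl⟩
      exact ⟨hadj, hy'⟩
    · rintro ⟨hadj, hys⟩
      exact ⟨⟨y, hys⟩, ⟨hx, hys, hadj⟩, rfl⟩
  rw [deg, ← himg, Set.ncard_image_of_injective _ Subtype.val_injective]

lemma wtGraph_eq_sum [Fintype V] (G : SimpleGraph V) : wtGraph G = ∑ x, wt G x := by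
  rw [wtGraph, wtSet, finsum_mem_univ, finsum_eq_sum_of_fintype]

end Aux

lemma wt_key {V : Type*} [Fintype V] (G : SimpleGraph V) (hdeg3 : ∀ x, deg G x ≤ 3)
    (v c : V) (hvc : G.Adj v c) (D : Set V) (hD : D = insert v (G.neighborSet v))
    (hcD : c ∈ D)
    (hND : ∀ x ∉ D, G.neighborSet x ∩ D ⊆ {c})
    (DF : Finset V) (hDF : ∀ x, x ∈ DF ↔ x ∈ D)
    (hsumD : 24 ≤ ∑ x ∈ DF, wt G x) :
    wtGraph ((⊤ : G.Subgraph).induce Dᶜ).coe + 14 ≤ wtGraph G := by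
  classical
  set H := ((⊤ : G.Subgraph).induce Dᶜ) with hH
  have hpt : ∀ (x : V) (hx : x ∈ Dᶜ),
      wt H.coe ⟨x, hx⟩ ≤ wt G x + (if G.Adj c x then 5 else 0) := by
    intro x hx
    have hdx := deg_induce G Dᶜ x hx
    by_cases hcx : G.Adj c x
    · have hcmem : c ∈ G.neighborSet x := hcx.symm
      have hNDeq : G.neighborSet x ∩ D = {c} :=
        subset_antisymm (hND x hx) (Set.singleton_subset_iff.mpr ⟨hcmem, hcD⟩)
      have hsplit : G.neighborSet x ∩ Dᶜ = G.neighborSet x \ {c} := by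
        ext y
        simp only [Set.mem_inter_iff, Set.mem_compl_iff, Set.mem_diff, Set.mem_singleton_iff]
        constructor
        · rintro ⟨h1, h2⟩
          exact ⟨h1, fun hyc => h2 (hyc ▸ hcD)⟩
        · rintro ⟨h1, h2⟩
          refine ⟨h1, fun hyD => h2 ?_⟩
          have hy : y ∈ G.neighborSet x ∩ D := ⟨h1, hyD⟩
          rw [hNDeq] at hy
          exact hy
      have hdeg' : deg H.coe ⟨x, hx⟩ = deg G x - 1 := by
        rw [hdx, hsplit, Set.ncard_diff_singleton_of_mem hcmem, deg]
      have hb1 : 0 < deg G x := by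
        rw [deg]
        exact (Set.ncard_pos (Set.toFinite _)).mpr ⟨c, hcmem⟩
      have hb3 := hdeg3 x
      rw [if_pos hcx]
      unfold wt
      rw [hdeg']
      have h1 : deg G x = 1 ∨ deg G x = 2 ∨ deg G x = 3 := by omega
      rcases h1 with h | h | h <;> rw [h] <;> norm_num
    · have hNDempty : G.neighborSet x ∩ D = ∅ := by
        ext y
        simp only [Set.mem_inter_iff, Set.mem_empty_iff_false, iff_false, not_and]
        intro hy hyD
        have h := hND x hx ⟨hy, hyD⟩
        simp only [Set.mem_singleton_iff] at h
        subst h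
        exact hcx hy.symm
      have hsplit : G.neighborSet x ∩ Dᶜ = G.neighborSet x := by
        ext y
        simp only [Set.mem_inter_iff, Set.mem_compl_iff, and_iff_left_iff_imp]
        intro hy hyD
        have : y ∈ G.neighborSet x ∩ D := ⟨hy, hyD⟩
        rw [hNDempty] at this
        exact this
      have hdeg' : deg H.coe ⟨x, hx⟩ = deg G x := by rw [hdx, hsplit, deg]
      rw [if_neg hcx, add_zero]
      unfold wt
      rw [hdeg']
  set A : Finset V := Dᶜ.toFinset with hA
  have hsub : ∀ x, x ∈ A ↔ x ∈ Dᶜ := fun x => Set.mem_toFinset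
  have h2 : ∑ x : ↥Dᶜ, wt H.coe x ≤ ∑ x : ↥Dᶜ, (wt G ↑x + (if G.Adj c ↑x then 5 else 0)) :=
    Finset.sum_le_sum fun i _ => hpt ↑i i.2
  have h3 : ∑ x ∈ A, (wt G x + (if G.Adj c x then 5 else 0))
      = ∑ x : ↥Dᶜ, (wt G ↑x + (if G.Adj c ↑x then 5 else 0)) :=
    Finset.sum_subtype A hsub _
  have h5 : ∑ x ∈ A, (if G.Adj c x then 5 else 0) ≤ 10 := by
    have heq : ∑ x ∈ A.filter (fun x => G.Adj c x), 5
        = ∑ x ∈ A, (if G.Adj c x then 5 else 0) := Finset.sum_filter _ _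
    rw [← heq, Finset.sum_const, smul_eq_mul]
    have hsubf : A.filter (fun x => G.Adj c x) ⊆ (G.neighborSet c).toFinset.erase v := by
      intro y hy
      rw [Finset.mem_filter] at hy
      obtain ⟨hyA, hyc⟩ := hy
      rw [Finset.mem_erase]
      refine ⟨?_, by simpa using hyc⟩
      rintro rfl
      exact (hsub y).mp hyA (hD ▸ Set.mem_insert _ _)
    have hcard : ((G.neighborSet c).toFinset.erase v).card ≤ 2 := by
      have hvmem : v ∈ (G.neighborSet c).toFinset := by simpa using hvc.symm
      rw [Finset.card_erase_of_mem hvmem]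
      have he : deg G c = (G.neighborSet c).toFinset.card := by
        rw [deg, Set.ncard_eq_toFinset_card']
      have := hdeg3 c
      omega
    have := Finset.card_le_card hsubf
    omega
  have h6 : ∑ x ∈ A, wt G x + ∑ x ∈ Aᶜ, wt G x = ∑ x, wt G x := Finset.sum_add_sum_compl A _
  have h7 : ∑ x ∈ Aᶜ, wt G x = ∑ x ∈ DF, wt G x := by
    apply Finset.sum_congr _ (fun _ _ => rfl)
    ext y
    simp [hA, Set.mem_toFinset, hDF y]
  calc wtGraph H.coe + 14 = (∑ x : ↥Dᶜ, wt H.coe x) + 14 := by rw [wtGraph_eq_sum]; congr!; rename_i h; exact congrArg _ (eq_of_heq h)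
    _ ≤ (∑ x ∈ A, (wt G x + (if G.Adj c x then 5 else 0))) + 14 := by
        rw [h3]; exact Nat.add_le_add_right h2 14
    _ = (∑ x ∈ A, wt G x) + (∑ x ∈ A, (if G.Adj c x then 5 else 0)) + 14 := by
        rw [Finset.sum_add_distrib]
    _ ≤ (∑ x ∈ A, wt G x) + (∑ x ∈ DF, wt G x) := by omega
    _ = ∑ x, wt G x := by rw [← h7, h6]
    _ = wtGraph G := (wtGraph_eq_sum G).symm

lemma idn_key {V : Type*} [Fintype V] (G : SimpleGraph V) (v : V) (D : Set V)
    (hD : D = insert v (G.neighborSet v)) :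
    indepDomNum G ≤ indepDomNum ((⊤ : G.Subgraph).induce Dᶜ).coe + 1 := by
  classical
  set H := ((⊤ : G.Subgraph).induce Dᶜ) with hH
  have hvD : v ∈ D := hD ▸ Set.mem_insert _ _
  obtain ⟨S₀, hS₀⟩ := exists_isIndepDomSet H.coe
  have hne : {n | ∃ S, IsIndepDomSet H.coe S ∧ S.ncard = n}.Nonempty := ⟨_, S₀, hS₀, rfl⟩
  obtain ⟨T, hT, hTcard⟩ := Nat.sInf_mem hne
  set S : Set V := insert v (Subtype.val '' T) with hS
  have hvim : v ∉ Subtype.val '' T := by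
    rintro ⟨t, _, rfl⟩
    exact t.2 hvD
  have hdom : IsDomSet G S := by
    intro x hx
    by_cases hxD : x ∈ D
    · have hxv : x ≠ v := fun h => hx (h ▸ Set.mem_insert _ _)
      have hxN : x ∈ G.neighborSet v := by
        rw [hD] at hxD
        rcases hxD with rfl | h
        · exact absurd rfl hxv
        · exact h
      exact ⟨v, Set.mem_insert _ _, hxN⟩
    · have hx' : (⟨x, hxD⟩ : ↥(Dᶜ : Set V)) ∉ T := by
        intro h
        exact hx (Set.mem_insert_of_mem _ ⟨_, h, rfl⟩)
      obtain ⟨u, hu, hadj⟩ := hT.1 _ hx'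
      refine ⟨↑u, Set.mem_insert_of_mem _ ⟨u, hu, rfl⟩, ?_⟩
      exact hadj.2.2
  have hNvD : G.neighborSet v ⊆ D := hD ▸ Set.subset_insert _ _
  have hindep : ∀ p ∈ S, ∀ q ∈ S, ¬ G.Adj p q := by
    intro p hp q hq hadj
    rcases hp with rfl | ⟨p', hp', rfl⟩ <;> rcases hq with rfl | ⟨q', hq', rfl⟩
    · exact G.irrefl hadj
    · exact q'.2 (hNvD hadj)
    · exact p'.2 (hNvD hadj.symm)
    · refine hT.2 p' hp' q' hq' ?_
      rw [SimpleGraph.Subgraph.coe_adj, SimpleGraph.Subgraph.induce_adj,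
        SimpleGraph.Subgraph.top_adj]
      exact ⟨p'.2, q'.2, hadj⟩
  have hcard : S.ncard = T.ncard + 1 := by
    rw [hS, Set.ncard_insert_of_notMem hvim (Set.toFinite _),
      Set.ncard_image_of_injective _ Subtype.val_injective]
  have hle : indepDomNum G ≤ S.ncard := Nat.sInf_le ⟨S, ⟨hdom, hindep⟩, rfl⟩
  rw [hcard, hTcard] at hle
  exact hle


/-- A minimal counterexample has no vertex with two neighbors of degree 1. -/
theorem no_vertex_with_two_deg_one_neighbors {V : Type*} [Fintype V] (G : SimpleGraph V)
    (hG : MinimalCounterexample G) :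
    ¬ ∃ v a b : V, a ≠ b ∧ G.Adj v a ∧ G.Adj v b ∧ deg G a = 1 ∧ deg G b = 1 := by
  classical
  rintro ⟨v, a, b, hab, hva, hvb, hda, hdb⟩
  obtain ⟨hdeg3, _, hlt, hmin⟩ := hG
  have hNa : G.neighborSet a = {v} := neighborSet_eq_of_deg_one hda hva
  have hNb : G.neighborSet b = {v} := neighborSet_eq_of_deg_one hdb hvb
  set D : Set V := insert v (G.neighborSet v) with hD
  set H := ((⊤ : G.Subgraph).induce Dᶜ) with hH
  have hvD : v ∈ D := hD ▸ Set.mem_insert _ _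
  have hHne : H ≠ ⊤ := by
    intro h
    have hv : v ∈ H.verts := by rw [h, SimpleGraph.Subgraph.verts_top]; trivial
    exact hv hvD
  have hw := hmin H hHne
  have hmemD : ∀ y, G.Adj v y → y ∈ D := fun y hy => hD ▸ Set.mem_insert_of_mem _ hy
  have hxx : ∀ x y : V, x ∉ D → ¬ G.Adj x v := by
    intro x y hx hadj
    exact hx (hmemD x hadj.symm)
  have hkey : ∃ c, G.Adj v c ∧ c ∈ D ∧ (∀ x ∉ D, G.neighborSet x ∩ D ⊆ {c}) ∧
      ∃ DF : Finset V, (∀ x, x ∈ DF ↔ x ∈ D) ∧ 24 ≤ ∑ x ∈ DF, wt G x := by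
    have hvanev : v ≠ a := hva.ne
    have hvbnev : v ≠ b := hvb.ne
    have hwa : wt G a = 9 := wt_of_deg_one hda
    have hwb : wt G b = 9 := wt_of_deg_one hdb
    by_cases hsubc : G.neighborSet v ⊆ {a, b}
    · -- degree-2 case: the "third neighbor" is taken to be a
      have hNveq : G.neighborSet v = {a, b} := by
        apply subset_antisymm hsubc
        rintro y (rfl | rfl)
        · exact hva
        · exact hvb
      refine ⟨a, hva, hD ▸ Set.mem_insert_of_mem _ hva, ?_, ?_⟩
      · rintro x hx y ⟨hyN, hyD⟩
        rw [hD] at hyD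
        rcases hyD with rfl | hyNv
        · exact absurd (hmemD x hyN.symm) hx
        · rw [hNveq] at hyNv
          rcases hyNv with rfl | rfl
          · rfl
          · exfalso
            have hxb : x ∈ G.neighborSet y := hyN.symm
            rw [hNb] at hxb
            rw [hxb] at hx
            exact hx hvD
      · refine ⟨{v, a, b}, ?_, ?_⟩
        · intro x
          rw [hD, hNveq]
          simp
        · have hwv : wt G v = 6 := by
            have hdv : deg G v = 2 := by rw [deg, hNveq, Set.ncard_pair hab]
            unfold wt
            rw [hdv]
            norm_num
          rw [Finset.sum_insert (by simp [hvanev, hvbnev]),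
            Finset.sum_insert (by simp [hab]), Finset.sum_singleton, hwv, hwa, hwb]
          norm_num
    · -- degree-3 case
      obtain ⟨c, hcNv, hcab⟩ := Set.not_subset.mp hsubc
      simp only [Set.mem_insert_iff, Set.mem_singleton_iff, not_or] at hcab
      obtain ⟨hca, hcb⟩ := hcab
      have hvc : G.Adj v c := hcNv
      have habc : ({a, b, c} : Set V).ncard = 3 := by
        rw [Set.ncard_insert_of_notMem (by simp [hab, (Ne.symm hca)]) (Set.toFinite _),
          Set.ncard_insert_of_notMem (by simp [Ne.symm hcb]) (Set.toFinite _),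
          Set.ncard_singleton]
      have hNveq : G.neighborSet v = {a, b, c} := by
        refine (Set.eq_of_subset_of_ncard_le ?_ ?_ (Set.toFinite _)).symm
        · rw [Set.insert_subset_iff, Set.insert_subset_iff, Set.singleton_subset_iff]
          exact ⟨hva, hvb, hcNv⟩
        · rw [habc]
          exact hdeg3 v
      refine ⟨c, hvc, hD ▸ Set.mem_insert_of_mem _ hcNv, ?_, ?_⟩
      · rintro x hx y ⟨hyN, hyD⟩
        rw [hD] at hyD
        rcases hyD with rfl | hyNv
        · exact absurd (hmemD x hyN.symm) hx
        · rw [hNveq] at hyNv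
          rcases hyNv with rfl | rfl | rfl
          · exfalso
            have hxa : x ∈ G.neighborSet y := hyN.symm
            rw [hNa] at hxa
            rw [hxa] at hx
            exact hx hvD
          · exfalso
            have hxb : x ∈ G.neighborSet y := hyN.symm
            rw [hNb] at hxb
            rw [hxb] at hx
            exact hx hvD
          · rfl
      · refine ⟨{v, a, b, c}, ?_, ?_⟩
        · intro x
          rw [hD, hNveq]
          simp
        · rw [Finset.sum_insert (by simp [hvanev, hvbnev, hvc.ne]),
            Finset.sum_insert (by simp [hab, Ne.symm hca]),
            Finset.sum_insert (by simp [Ne.symm hcb]), Finset.sum_singleton, hwa, hwb]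
          have h1 := wt_ge_five G v
          have h2 := wt_ge_five G c
          omega
  obtain ⟨c, hvc, hcD, hND, DF, hDF, hsum⟩ := hkey
  have hk1 := wt_key G hdeg3 v c hvc D hD hcD hND DF hDF hsum
  have hk2 := idn_key G v D hD
  rw [← hH] at hk1 hk2
  omega
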